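/- A polynomial a ∈ ℂ[X] belongs to 𝓗² if and only if there exist α₁, α₂ ∈ ℂ with 0 < |α₁| < 1, 0 < |α₂| < 1 and α₁ ≠ α₂ such that a(λ) = [(λ − α₁)(1 − conj(α₁)·λ)/|α₁|] · [(λ − α₂)(1 − conj(α₂)·λ)/|α₂|] for all λ ∈ ℂ. -/

import Mathlib

open Polynomial

/-- Membership in `𝓗²`: `a ∈ ℂ[X]` has degree at most 4, satisfies the reality
condition `λ⁴·conj(a(1/conj λ)) = a(λ)`, the positivity condition `λ⁻²·a(λ) > 0`
on the unit circle, has pairwise distinct roots, and its `X⁴`-coefficient has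
absolute value 1. -/
def MemH2 (a : ℂ[X]) : Prop :=
  a.degree ≤ 4 ∧
  (∀ l : ℂ, l ≠ 0 →
    l ^ 4 * (starRingEnd ℂ) (a.eval ((starRingEnd ℂ) l)⁻¹) = a.eval l) ∧
  (∀ l : ℂ, ‖l‖ = 1 → ∃ r : ℝ, 0 < r ∧ a.eval l = (r : ℂ) * l ^ 2) ∧
  a.roots.Nodup ∧
  ‖(a.coeff 4)‖ = 1

namespace H2Aux

local notation "conj" => starRingEnd ℂ

lemma factor_id (α l : ℂ) (h : α ≠ 0) :
    (l - α) * (1 - conj α * l) / (‖α‖ : ℂ)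
      = (-conj α / (‖α‖ : ℂ)) * ((l - α) * (l - (conj α)⁻¹)) := by
  have h1 : conj α ≠ 0 := by simpa using h
  have h2 : (‖α‖ : ℂ) ≠ 0 := by simpa using h
  field_simp; ring

noncomputable def Pa (α₁ α₂ : ℂ) : ℂ[X] :=
  C (conj α₁ * conj α₂ / ((‖α₁‖ : ℂ) * (‖α₂‖ : ℂ))) *
    ((X - C α₁) * (X - C (conj α₁)⁻¹) * ((X - C α₂) * (X - C (conj α₂)⁻¹)))

variable (α₁ α₂ : ℂ)

lemma eval_Pa (l : ℂ) (h₁ : α₁ ≠ 0) (h₂ : α₂ ≠ 0) :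
    (Pa α₁ α₂).eval l =
      ((l - α₁) * (1 - conj α₁ * l) / (‖α₁‖ : ℂ)) *
      ((l - α₂) * (1 - conj α₂ * l) / (‖α₂‖ : ℂ)) := by
  rw [factor_id α₁ l h₁, factor_id α₂ l h₂]
  simp only [Pa, eval_mul, eval_C, eval_sub, eval_X]
  ring

lemma c_ne (h₁ : α₁ ≠ 0) (h₂ : α₂ ≠ 0) :
    conj α₁ * conj α₂ / ((‖α₁‖ : ℂ) * (‖α₂‖ : ℂ)) ≠ 0 := by
  have h1 : conj α₁ ≠ 0 := by simpa using h₁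
  have h2 : conj α₂ ≠ 0 := by simpa using h₂
  have h3 : (‖α₁‖ : ℂ) ≠ 0 := by simpa using h₁
  have h4 : (‖α₂‖ : ℂ) ≠ 0 := by simpa using h₂
  exact div_ne_zero (mul_ne_zero h1 h2) (mul_ne_zero h3 h4)

lemma abs_c (h₁ : α₁ ≠ 0) (h₂ : α₂ ≠ 0) :
    ‖(conj α₁ * conj α₂ / ((‖α₁‖ : ℂ) * (‖α₂‖ : ℂ)))‖ = 1 := by
  have h3 : ‖α₁‖ ≠ 0 := by simpa using h₁
  have h4 : ‖α₂‖ ≠ 0 := by simpa using h₂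
  rw [norm_div, norm_mul, norm_mul, Complex.norm_conj, Complex.norm_conj, Complex.norm_real,
    Complex.norm_real, Real.norm_of_nonneg (norm_nonneg _), Real.norm_of_nonneg (norm_nonneg _),
    div_self (mul_ne_zero h3 h4)]

lemma degree_Pa (h₁ : α₁ ≠ 0) (h₂ : α₂ ≠ 0) : (Pa α₁ α₂).degree = 4 := by
  rw [Pa, degree_mul, degree_mul, degree_mul, degree_mul, degree_C (c_ne α₁ α₂ h₁ h₂),
    degree_X_sub_C, degree_X_sub_C, degree_X_sub_C, degree_X_sub_C]
  rfl

lemma coeff4_Pa :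
    (Pa α₁ α₂).coeff 4 = conj α₁ * conj α₂ / ((‖α₁‖ : ℂ) * (‖α₂‖ : ℂ)) := by
  have hm : (((X - C α₁) * (X - C (conj α₁)⁻¹) * ((X - C α₂) * (X - C (conj α₂)⁻¹))) : ℂ[X]).Monic :=
    (((monic_X_sub_C α₁).mul (monic_X_sub_C _)).mul ((monic_X_sub_C α₂).mul (monic_X_sub_C _)))
  have hd : (((X - C α₁) * (X - C (conj α₁)⁻¹) * ((X - C α₂) * (X - C (conj α₂)⁻¹))) : ℂ[X]).natDegree = 4 := by
    rw [((monic_X_sub_C α₁).mul (monic_X_sub_C _)).natDegree_mul ((monic_X_sub_C α₂).mul (monic_X_sub_C _)),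
      (monic_X_sub_C α₁).natDegree_mul (monic_X_sub_C _),
      (monic_X_sub_C α₂).natDegree_mul (monic_X_sub_C _)]
    simp [natDegree_X_sub_C]
  rw [Pa, coeff_C_mul, ← hd, ← leadingCoeff, hm.leadingCoeff, mul_one]

lemma roots_Pa (h₁ : α₁ ≠ 0) (h₂ : α₂ ≠ 0) :
    (Pa α₁ α₂).roots = {α₁, (conj α₁)⁻¹, α₂, (conj α₂)⁻¹} := by
  rw [Pa, roots_C_mul _ (c_ne α₁ α₂ h₁ h₂), roots_mul, roots_mul, roots_mul,
    roots_X_sub_C, roots_X_sub_C, roots_X_sub_C, roots_X_sub_C]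
  · rfl
  · exact mul_ne_zero (X_sub_C_ne_zero _) (X_sub_C_ne_zero _)
  · exact mul_ne_zero (X_sub_C_ne_zero _) (X_sub_C_ne_zero _)
  · exact mul_ne_zero (mul_ne_zero (X_sub_C_ne_zero _) (X_sub_C_ne_zero _))
      (mul_ne_zero (X_sub_C_ne_zero _) (X_sub_C_ne_zero _))

lemma abs_rho (α : ℂ) : ‖(conj α)⁻¹‖ = (‖α‖)⁻¹ := by
  rw [norm_inv, Complex.norm_conj]

lemma ne_inv_of_lt_one {x y : ℝ} (hx : x < 1) (hy0 : 0 < y) (hy : y < 1) : x ≠ y⁻¹ := by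
  intro h
  have h1 : 1 < y⁻¹ := one_lt_inv_iff₀.mpr ⟨hy0, hy⟩
  linarith [h ▸ h1]

lemma reverse_dir (a : ℂ[X]) (p1 : 0 < ‖α₁‖) (q1 : ‖α₁‖ < 1)
    (p2 : 0 < ‖α₂‖) (q2 : ‖α₂‖ < 1) (hne : α₁ ≠ α₂)
    (h : ∀ l : ℂ, a.eval l =
      ((l - α₁) * (1 - conj α₁ * l) / (‖α₁‖ : ℂ)) *
      ((l - α₂) * (1 - conj α₂ * l) / (‖α₂‖ : ℂ))) : MemH2 a := by
  have h₁ : α₁ ≠ 0 := by simpa using p1.ne'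
  have h₂ : α₂ ≠ 0 := by simpa using p2.ne'
  have h3 : (‖α₁‖ : ℂ) ≠ 0 := by simpa using h₁
  have h4 : (‖α₂‖ : ℂ) ≠ 0 := by simpa using h₂
  have hP : a = Pa α₁ α₂ := by
    apply Polynomial.funext
    intro l
    rw [h l, eval_Pa α₁ α₂ l h₁ h₂]
  refine ⟨?_, ?_, ?_, ?_, ?_⟩
  · rw [hP, degree_Pa α₁ α₂ h₁ h₂]
  · intro l hl
    rw [h l, h ((conj l)⁻¹)]
    simp only [map_mul, map_div₀, map_sub, map_one, map_inv₀, Complex.conj_conj,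
      Complex.conj_ofReal]
    field_simp
  · intro l hl
    have hl1 : l ≠ α₁ := by rintro rfl; exact absurd hl q1.ne
    have hl2 : l ≠ α₂ := by rintro rfl; exact absurd hl q2.ne
    refine ⟨Complex.normSq (l - α₁) * Complex.normSq (l - α₂) /
        (‖α₁‖ * ‖α₂‖), ?_, ?_⟩
    · apply div_pos (mul_pos ?_ ?_) (mul_pos p1 p2) <;>
        [exact Complex.normSq_pos.2 (sub_ne_zero.2 hl1);
         exact Complex.normSq_pos.2 (sub_ne_zero.2 hl2)]
    · rw [h l]
      have hll : l * conj l = 1 := by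
        rw [Complex.mul_conj]; norm_cast; rw [Complex.normSq_eq_norm_sq, hl]; norm_num
      have e1 : (1 - conj α₁ * l) = conj (l - α₁) * l := by
        rw [map_sub]; ring_nf; rw [hll]; ring
      have e2 : (1 - conj α₂ * l) = conj (l - α₂) * l := by
        rw [map_sub]; ring_nf; rw [hll]; ring
      rw [e1, e2]
      push_cast
      rw [← Complex.mul_conj, ← Complex.mul_conj]
      field_simp
  · rw [hP, roots_Pa α₁ α₂ h₁ h₂]
    have d1 : α₁ ≠ (conj α₁)⁻¹ := by
      intro hcon
      have habs := congrArg norm hcon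
      rw [abs_rho] at habs
      exact ne_inv_of_lt_one q1 p1 q1 habs
    have d2 : α₁ ≠ (conj α₂)⁻¹ := by
      intro hcon
      have habs := congrArg norm hcon
      rw [abs_rho] at habs
      exact ne_inv_of_lt_one q1 p2 q2 habs
    have d3 : α₂ ≠ (conj α₁)⁻¹ := by
      intro hcon
      have habs := congrArg norm hcon
      rw [abs_rho] at habs
      exact ne_inv_of_lt_one q2 p1 q1 habs
    have d4 : α₂ ≠ (conj α₂)⁻¹ := by
      intro hcon
      have habs := congrArg norm hcon
      rw [abs_rho] at habs
      exact ne_inv_of_lt_one q2 p2 q2 habs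
    have d5 : (conj α₁)⁻¹ ≠ (conj α₂)⁻¹ := by
      intro hcon
      exact hne (by simpa using congrArg (fun z => conj z⁻¹) hcon)
    simp [Multiset.nodup_cons, Multiset.mem_cons, Multiset.mem_singleton,
      d1, d2, d3, d4, d5, hne, d1.symm, d2.symm, d3.symm, d4.symm]
  · rw [hP, coeff4_Pa, abs_c α₁ α₂ h₁ h₂]

lemma coeff_zero_eq (a : ℂ[X]) (hnd : a.natDegree = 4)
    (hre : ∀ l : ℂ, l ≠ 0 → l ^ 4 * conj (a.eval ((conj l)⁻¹)) = a.eval l) :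
    a.coeff 0 = conj (a.coeff 4) := by
  set b : ℂ[X] := ∑ k ∈ Finset.range 5, C (conj (a.coeff (4 - k))) * X ^ k with hbdef
  have hb : ∀ l : ℂ, l ≠ 0 → b.eval l = a.eval l := by
    intro l hl
    rw [← hre l hl]
    rw [eval_eq_sum_range' (by omega : a.natDegree < 5)]
    simp only [map_sum, map_mul, map_pow, map_inv₀, Complex.conj_conj]
    rw [Finset.mul_sum, hbdef]
    rw [← Finset.sum_range_reflect (fun k => l ^ 4 * (conj (a.coeff k) * ((l)⁻¹) ^ k)) 5]
    simp only [eval_finset_sum, eval_mul, eval_pow, eval_C, eval_X]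
    refine Finset.sum_congr rfl fun j hj => ?_
    rw [Finset.mem_range] at hj
    have h54 : 5 - 1 - j = 4 - j := by omega
    rw [h54]
    have hpow : l ^ 4 * (l⁻¹) ^ (4 - j) = l ^ j := by
      rw [inv_pow, ← pow_sub₀ l hl (by omega : 4 - j ≤ 4)]
      congr 1; omega
    calc conj (a.coeff (4 - j)) * l ^ j
        = conj (a.coeff (4 - j)) * (l ^ 4 * (l⁻¹) ^ (4 - j)) := by rw [hpow]
      _ = l ^ 4 * (conj (a.coeff (4 - j)) * l⁻¹ ^ (4 - j)) := by ring
  have hba : b = a := by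
    rw [← sub_eq_zero]
    apply Polynomial.eq_zero_of_infinite_isRoot
    apply Set.Infinite.mono (s := {x : ℂ | x ≠ 0})
    · intro x hx
      simp only [Set.mem_setOf_eq, IsRoot, eval_sub, sub_eq_zero]
      exact hb x hx
    · exact Set.infinite_coe_iff.mp (by
        have : ({x : ℂ | x ≠ 0}) = ({0} : Set ℂ)ᶜ := by ext; simp
        rw [this]
        exact Set.infinite_coe_iff.mpr ((Set.finite_singleton 0).infinite_compl))
  have hb0 : b.coeff 0 = conj (a.coeff 4) := by
    rw [hbdef]
    simp [coeff_X_pow, Finset.sum_ite_eq']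
  rw [← hb0, hba]

lemma rho_invol (x : ℂ) : (conj ((conj x)⁻¹))⁻¹ = x := by
  rw [map_inv₀, Complex.conj_conj, inv_inv]

lemma roots_structure (a : ℂ[X]) (ha : a ≠ 0) (hnd4 : a.natDegree = 4)
    (hnd : a.roots.Nodup)
    (h0 : ∀ x ∈ a.roots, x ≠ 0)
    (h1 : ∀ x ∈ a.roots, ‖x‖ ≠ 1)
    (hmap : ∀ x ∈ a.roots, (conj x)⁻¹ ∈ a.roots) :
    ∃ α₁ α₂ : ℂ, α₁ ≠ α₂ ∧ 0 < ‖α₁‖ ∧ ‖α₁‖ < 1 ∧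
      0 < ‖α₂‖ ∧ ‖α₂‖ < 1 ∧
      a.roots = {α₁, α₂, (conj α₁)⁻¹, (conj α₂)⁻¹} := by
  have hcard : Multiset.card a.roots = 4 := by
    rw [← hnd4]
    exact splits_iff_card_roots.mp (IsAlgClosed.splits a)
  set T := a.roots.toFinset with hT
  have hTmem : ∀ x, x ∈ T ↔ x ∈ a.roots := fun x => Multiset.mem_toFinset
  have hTcard : T.card = 4 := by
    rw [hT, Multiset.toFinset_card_of_nodup hnd, hcard]
  set In := T.filter (fun x => ‖x‖ < 1) with hIn
  set Out := T.filter (fun x => 1 < ‖x‖) with hOut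
  have habs_rho : ∀ x : ℂ, ‖(conj x)⁻¹‖ = (‖x‖)⁻¹ := fun x => by
    rw [norm_inv, Complex.norm_conj]
  have hIO : ∀ x ∈ In, (conj x)⁻¹ ∈ Out := by
    intro x hx
    rw [hIn, Finset.mem_filter] at hx
    obtain ⟨hxT, hxlt⟩ := hx
    have hx0 : x ≠ 0 := h0 x ((hTmem x).mp hxT)
    have hxpos : 0 < ‖x‖ := by simpa using hx0
    rw [hOut, Finset.mem_filter]
    exact ⟨(hTmem _).mpr (hmap x ((hTmem x).mp hxT)),
      by rw [habs_rho]; exact (one_lt_inv_iff₀.mpr ⟨hxpos, hxlt⟩)⟩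
  have hOI : ∀ x ∈ Out, (conj x)⁻¹ ∈ In := by
    intro x hx
    rw [hOut, Finset.mem_filter] at hx
    obtain ⟨hxT, hxlt⟩ := hx
    rw [hIn, Finset.mem_filter]
    refine ⟨(hTmem _).mpr (hmap x ((hTmem x).mp hxT)), ?_⟩
    rw [habs_rho]
    exact inv_lt_one_of_one_lt₀ hxlt
  have hinj : ∀ s : Finset ℂ, Set.InjOn (fun x => (conj x)⁻¹) ↑s := by
    intro s x _ y _ hxy
    have := congrArg (fun z => (conj z)⁻¹) hxy
    simpa [rho_invol] using this
  have hcle1 : In.card ≤ Out.card := Finset.card_le_card_of_injOn _ hIO (hinj In)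
  have hcle2 : Out.card ≤ In.card := Finset.card_le_card_of_injOn _ hOI (hinj Out)
  have hdisj : Disjoint In Out := by
    rw [Finset.disjoint_left]
    intro x hx hy
    rw [hIn, Finset.mem_filter] at hx
    rw [hOut, Finset.mem_filter] at hy
    exact absurd (hx.2.trans hy.2) (lt_irrefl _)
  have hunion : In ∪ Out = T := by
    apply Finset.Subset.antisymm
    · exact Finset.union_subset (Finset.filter_subset _ _) (Finset.filter_subset _ _)
    · intro x hx
      rcases lt_or_gt_of_ne (h1 x ((hTmem x).mp hx)) with h | h
      · exact Finset.mem_union_left _ (Finset.mem_filter.mpr ⟨hx, h⟩)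
      · exact Finset.mem_union_right _ (Finset.mem_filter.mpr ⟨hx, h⟩)
  have hcards : In.card + Out.card = 4 := by
    rw [← Finset.card_union_of_disjoint hdisj, hunion, hTcard]
  have hIn2 : In.card = 2 := by omega
  obtain ⟨α₁, α₂, hne, hInEq⟩ := Finset.card_eq_two.mp hIn2
  have hα₁ : α₁ ∈ In := by rw [hInEq]; simp
  have hα₂ : α₂ ∈ In := by rw [hInEq]; simp
  rw [hIn, Finset.mem_filter] at hα₁ hα₂
  have hr1 : α₁ ∈ a.roots := (hTmem _).mp hα₁.1
  have hr2 : α₂ ∈ a.roots := (hTmem _).mp hα₂.1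
  have hp1 : 0 < ‖α₁‖ := by simpa using h0 α₁ hr1
  have hp2 : 0 < ‖α₂‖ := by simpa using h0 α₂ hr2
  refine ⟨α₁, α₂, hne, hp1, hα₁.2, hp2, hα₂.2, ?_⟩
  have hrr1 : (conj α₁)⁻¹ ∈ a.roots := hmap α₁ hr1
  have hrr2 : (conj α₂)⁻¹ ∈ a.roots := hmap α₂ hr2
  have hb1 : 1 < ‖(conj α₁)⁻¹‖ := by
    rw [habs_rho]; exact one_lt_inv_iff₀.mpr ⟨hp1, hα₁.2⟩
  have hb2 : 1 < ‖(conj α₂)⁻¹‖ := by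
    rw [habs_rho]; exact one_lt_inv_iff₀.mpr ⟨hp2, hα₂.2⟩
  have d5 : (conj α₁)⁻¹ ≠ (conj α₂)⁻¹ := by
    intro hcon
    exact hne (by simpa [rho_invol] using congrArg (fun z => (conj z)⁻¹) hcon)
  have hmnd : Multiset.Nodup ({α₁, α₂, (conj α₁)⁻¹, (conj α₂)⁻¹} : Multiset ℂ) := by
    have n1 : α₁ ≠ (conj α₁)⁻¹ := fun h => by rw [← h] at hb1; exact absurd hα₁.2 (by linarith)
    have n2 : α₁ ≠ (conj α₂)⁻¹ := fun h => by rw [← h] at hb2; exact absurd hα₁.2 (by linarith)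
    have n3 : α₂ ≠ (conj α₁)⁻¹ := fun h => by rw [← h] at hb1; exact absurd hα₂.2 (by linarith)
    have n4 : α₂ ≠ (conj α₂)⁻¹ := fun h => by rw [← h] at hb2; exact absurd hα₂.2 (by linarith)
    refine Multiset.nodup_cons.mpr ⟨?_, Multiset.nodup_cons.mpr ⟨?_,
      Multiset.nodup_cons.mpr ⟨?_, Multiset.nodup_singleton _⟩⟩⟩ <;>
      simp [hne, n1, n2, n3, n4, d5]
  have hle : ({α₁, α₂, (conj α₁)⁻¹, (conj α₂)⁻¹} : Multiset ℂ) ≤ a.roots := by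
    rw [Multiset.le_iff_subset hmnd]
    intro x hx
    simp only [Multiset.insert_eq_cons, Multiset.mem_cons, Multiset.mem_singleton] at hx
    rcases hx with rfl | rfl | rfl | rfl
    exacts [hr1, hr2, hrr1, hrr2]
  exact (Multiset.eq_of_le_of_card_le hle (by rw [hcard]; rfl)).symm

lemma one_sub_pair (α : ℂ) (hα : α ≠ 0) :
    (1 - α) * (1 - (conj α)⁻¹) = -(Complex.normSq (1 - α) : ℂ) / conj α := by
  have hc : conj α ≠ 0 := by simpa using hα
  rw [← Complex.mul_conj]
  field_simp
  rw [map_sub, map_one]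
  ring


lemma phase_det (a4 : ℂ) (α₁ α₂ : ℂ) (r : ℝ) (hr : 0 < r)
    (h₁ : α₁ ≠ 0) (h₂ : α₂ ≠ 0) (n₁ : (1:ℂ) - α₁ ≠ 0) (n₂ : (1:ℂ) - α₂ ≠ 0)
    (habs : ‖a4‖ = 1)
    (heq : a4 * ((1 - α₁) * ((1 - α₂) * ((1 - (conj α₁)⁻¹) * (1 - (conj α₂)⁻¹)))) = (r : ℂ)) :
    a4 = conj α₁ * conj α₂ / ((‖α₁‖ : ℂ) * (‖α₂‖ : ℂ)) := by
  have hc1 : conj α₁ ≠ 0 := by simpa using h₁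
  have hc2 : conj α₂ ≠ 0 := by simpa using h₂
  have hn1 : (0:ℝ) < Complex.normSq (1 - α₁) := Complex.normSq_pos.mpr n₁
  have hn2 : (0:ℝ) < Complex.normSq (1 - α₂) := Complex.normSq_pos.mpr n₂
  have key : a4 = ((r / (Complex.normSq (1 - α₁) * Complex.normSq (1 - α₂)) : ℝ) : ℂ)
      * (conj α₁ * conj α₂) := by
    have e1 := one_sub_pair α₁ h₁
    have e2 := one_sub_pair α₂ h₂
    have hrw : a4 * ((1 - α₁) * ((1 - α₂) * ((1 - (conj α₁)⁻¹) * (1 - (conj α₂)⁻¹))))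
        = a4 * (((1 - α₁) * (1 - (conj α₁)⁻¹)) * ((1 - α₂) * (1 - (conj α₂)⁻¹))) := by ring
    rw [hrw, e1, e2] at heq
    have hN1 : ((Complex.normSq (1 - α₁) : ℂ)) ≠ 0 := by exact_mod_cast hn1.ne'
    have hN2 : ((Complex.normSq (1 - α₂) : ℂ)) ≠ 0 := by exact_mod_cast hn2.ne'
    push_cast
    field_simp at heq ⊢
    linear_combination heq
  set t : ℝ := r / (Complex.normSq (1 - α₁) * Complex.normSq (1 - α₂)) with ht
  have htpos : 0 < t := div_pos hr (mul_pos hn1 hn2)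
  have habs2 : t * (‖α₁‖ * ‖α₂‖) = 1 := by
    have := congrArg norm key
    rwa [habs, norm_mul, norm_mul, Complex.norm_real, Complex.norm_conj, Complex.norm_conj,
      Real.norm_of_nonneg htpos.le, eq_comm] at this
  have hA1 : (0:ℝ) < ‖α₁‖ := by simpa using h₁
  have hA2 : (0:ℝ) < ‖α₂‖ := by simpa using h₂
  have htval : t = ((‖α₁‖) * (‖α₂‖))⁻¹ := by
    field_simp
    linarith [habs2]
  rw [key, htval]
  push_cast
  have : ((‖α₁‖ : ℂ)) * ((‖α₂‖ : ℂ)) ≠ 0 := by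
    simp [hA1.ne', hA2.ne']
  field_simp


lemma forward_dir (a : ℂ[X]) (h : MemH2 a) :
    ∃ α₁ α₂ : ℂ,
      0 < ‖α₁‖ ∧ ‖α₁‖ < 1 ∧
      0 < ‖α₂‖ ∧ ‖α₂‖ < 1 ∧ α₁ ≠ α₂ ∧
      ∀ l : ℂ, a.eval l =
        ((l - α₁) * (1 - conj α₁ * l) / (‖α₁‖ : ℂ)) *
        ((l - α₂) * (1 - conj α₂ * l) / (‖α₂‖ : ℂ)) := by
  obtain ⟨hdeg, hre, hpos, hnd, hc4⟩ := h
  have ha4 : a.coeff 4 ≠ 0 := fun h => by simp [h] at hc4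
  have hnd4 : a.natDegree = 4 :=
    le_antisymm (natDegree_le_iff_degree_le.2 hdeg) (le_natDegree_of_ne_zero ha4)
  have ha : a ≠ 0 := fun h => ha4 (by simp [h])
  have h00 : a.coeff 0 ≠ 0 := by
    rw [coeff_zero_eq a hnd4 hre]
    simpa using ha4
  have h0 : ∀ x ∈ a.roots, x ≠ 0 := by
    rintro x hx rfl
    refine h00 ?_
    rw [coeff_zero_eq_eval_zero]
    exact (mem_roots ha).mp hx
  have hcirc : ∀ l : ℂ, ‖l‖ = 1 → a.eval l ≠ 0 := by
    intro l hl
    obtain ⟨r, hr, he⟩ := hpos l hl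
    rw [he]
    have hl0 : l ≠ 0 := fun h => by rw [h] at hl; simp at hl
    exact mul_ne_zero (by exact_mod_cast hr.ne') (pow_ne_zero _ hl0)
  have h1 : ∀ x ∈ a.roots, ‖x‖ ≠ 1 := by
    intro x hx habs
    exact hcirc x habs ((mem_roots ha).mp hx)
  have hmap : ∀ x ∈ a.roots, (conj x)⁻¹ ∈ a.roots := by
    intro x hx
    have hx0 : x ≠ 0 := h0 x hx
    have hcx : (conj x)⁻¹ ≠ 0 := by simpa using hx0
    have hv := hre ((conj x)⁻¹) hcx
    rw [mem_roots ha]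
    show a.eval ((conj x)⁻¹) = 0
    rw [← hv]
    have hxr : a.eval ((conj ((conj x)⁻¹))⁻¹) = 0 := by
      rw [map_inv₀, Complex.conj_conj, inv_inv]
      exact (mem_roots ha).mp hx
    rw [hxr, map_zero, mul_zero]
  obtain ⟨α₁, α₂, hne, p1, q1, p2, q2, hroots⟩ :=
    roots_structure a ha hnd4 hnd h0 h1 hmap
  have h₁ : α₁ ≠ 0 := by simpa using p1.ne'
  have h₂ : α₂ ≠ 0 := by simpa using p2.ne'
  have hlead : a.leadingCoeff = a.coeff 4 := by rw [leadingCoeff, hnd4]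
  have ha_eq := (C_leadingCoeff_mul_prod_multiset_X_sub_C (splits_iff_card_roots.mp (IsAlgClosed.splits a))).symm
  rw [hroots, hlead] at ha_eq
  simp only [Multiset.insert_eq_cons, Multiset.map_cons, Multiset.map_singleton,
    Multiset.prod_cons, Multiset.prod_singleton] at ha_eq
  have heval : ∀ l : ℂ, a.eval l = a.coeff 4 *
      ((l - α₁) * ((l - α₂) * ((l - (conj α₁)⁻¹) * (l - (conj α₂)⁻¹)))) := by
    intro l
    conv_lhs => rw [ha_eq]
    simp [eval_mul, eval_sub]
  obtain ⟨r, hr, h1eq⟩ := hpos 1 (by simp)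
  have heq : a.coeff 4 * ((1 - α₁) * ((1 - α₂) *
      ((1 - (conj α₁)⁻¹) * (1 - (conj α₂)⁻¹)))) = (r : ℂ) := by
    rw [← heval 1, h1eq]; ring
  have n₁ : (1:ℂ) - α₁ ≠ 0 := sub_ne_zero.mpr (fun h => by
    rw [← h] at q1; simp at q1)
  have n₂ : (1:ℂ) - α₂ ≠ 0 := sub_ne_zero.mpr (fun h => by
    rw [← h] at q2; simp at q2)
  have ha4val := phase_det (a.coeff 4) α₁ α₂ r hr h₁ h₂ n₁ n₂ hc4 heq
  refine ⟨α₁, α₂, p1, q1, p2, q2, hne, fun l => ?_⟩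
  rw [heval l, ha4val, factor_id α₁ l h₁, factor_id α₂ l h₂]
  ring

end H2Aux

/-- `a ∈ 𝓗²` if and only if
`a(λ) = [(λ−α₁)(1−conj(α₁)λ)/|α₁|]·[(λ−α₂)(1−conj(α₂)λ)/|α₂|]` for some
`α₁ ≠ α₂` with `0 < |α₁| < 1` and `0 < |α₂| < 1`. -/
theorem stmt_13 (a : ℂ[X]) :
    MemH2 a ↔ ∃ α₁ α₂ : ℂ,
      0 < ‖α₁‖ ∧ ‖α₁‖ < 1 ∧
      0 < ‖α₂‖ ∧ ‖α₂‖ < 1 ∧ α₁ ≠ α₂ ∧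
      ∀ l : ℂ, a.eval l =
        ((l - α₁) * (1 - (starRingEnd ℂ) α₁ * l) / (‖α₁‖ : ℂ)) *
        ((l - α₂) * (1 - (starRingEnd ℂ) α₂ * l) / (‖α₂‖ : ℂ)) := by
  constructor
  · exact H2Aux.forward_dir a
  · rintro ⟨α₁, α₂, p1, q1, p2, q2, hne, hf⟩
    exact H2Aux.reverse_dir α₁ α₂ a p1 q1 p2 q2 hne hf
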